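/- If the ∃-player has a winning strategy in the graph game on (G, C, s, R) constructed from the restricted quantified Boolean formula Q, then Q is true. -/

import Mathlib

namespace PhutballQBF

/-- A literal: a variable `xₗ` (`pos l`) or its negation `¬xₗ` (`neg l`). -/
inductive Lit where
  | pos (l : ℕ)
  | neg (l : ℕ)
deriving DecidableEq

/-- The index of the variable occurring in a literal. -/
def Lit.var : Lit → ℕ
  | .pos l => l
  | .neg l => l

/-- Evaluation of a literal under a Boolean assignment. -/
def Lit.eval (σ : ℕ → Bool) : Lit → Bool
  | .pos l => σ l
  | .neg l => !(σ l)

/-- Well-formedness of the 3CNF `F = F₁ ∧ ⋯ ∧ F_m`: the literal `l_{i,j}` (for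
`1 ≤ i ≤ m`, `1 ≤ j ≤ 3`) mentions one of the variables `x₁, …, xₙ`. -/
def LitWF (n m : ℕ) (lit : ℕ → ℕ → Lit) : Prop :=
  ∀ i j, 1 ≤ i → i ≤ m → 1 ≤ j → j ≤ 3 → 1 ≤ (lit i j).var ∧ (lit i j).var ≤ n

/-- The clause `Fᵢ = (l_{i,1} ∨ l_{i,2} ∨ l_{i,3})` evaluates to true under `σ`. -/
def ClauseTrue (lit : ℕ → ℕ → Lit) (i : ℕ) (σ : ℕ → Bool) : Prop :=
  ∃ j, 1 ≤ j ∧ j ≤ 3 ∧ (lit i j).eval σ = true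

/-- The 3CNF formula `F = F₁ ∧ ⋯ ∧ F_m` evaluates to true under `σ`. -/
def FTrue (lit : ℕ → ℕ → Lit) (m : ℕ) (σ : ℕ → Bool) : Prop :=
  ∀ i, 1 ≤ i → i ≤ m → ClauseTrue lit i σ

/-- `QAux P i k σ`: the quantified statement with `k` variables `x_i, …, x_{i+k-1}`
still to be quantified (existentially when the index is odd, universally when even),
the remaining variables having the values recorded in `σ`. -/
def QAux (P : (ℕ → Bool) → Prop) : ℕ → ℕ → (ℕ → Bool) → Prop
  | _, 0, σ => P σ
  | i, k + 1, σ =>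
      if i % 2 = 1 then ∃ b, QAux P (i + 1) k (Function.update σ i b)
      else ∀ b, QAux P (i + 1) k (Function.update σ i b)

/-- Truth of the restricted quantified Boolean formula
`Q = ∃x₁ ∀x₂ ∃x₃ ⋯ ∀xₙ F(x₁, …, xₙ)`. -/
def QTrue (n m : ℕ) (lit : ℕ → ℕ → Lit) : Prop :=
  QAux (FTrue lit m) 1 n (fun _ => false)

/-- The vertices of the graph `G` built from `Q` (with natural-number indices;
`g 0` is the extra vertex `g₀`). -/
inductive Vtx where
  | a (i : ℕ) | b (i : ℕ) | c (i : ℕ) | d (i : ℕ) | e (i : ℕ) | f (i : ℕ) | g (i : ℕ)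
  | x (i : ℕ) | y (i : ℕ) | z (i : ℕ) | w (i : ℕ) (j : ℕ)
deriving DecidableEq

/-- A directed edge. -/
abbrev Edge := Vtx × Vtx

/-- The edge set `E(G)` of the graph `G` constructed from `Q` (with `n` variables and
`m` clauses): the variable components `G(xᵢ)`, the connecting edges `(gᵢ, aᵢ₊₁)` for
`i = 0, …, n-1`, the edge `(gₙ, x₁)`, and the formula component `G(F)`. -/
def EG (n m : ℕ) : Set Edge :=
  { p | (∃ i, 1 ≤ i ∧ i ≤ n ∧
          (p = (Vtx.a i, Vtx.b i) ∨ p = (Vtx.a i, Vtx.c i) ∨ p = (Vtx.b i, Vtx.e i) ∨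
           p = (Vtx.c i, Vtx.f i) ∨ p = (Vtx.e i, Vtx.d i) ∨ p = (Vtx.f i, Vtx.d i) ∨
           p = (Vtx.d i, Vtx.g i))) ∨
        (∃ i, i ≤ n - 1 ∧ p = (Vtx.g i, Vtx.a (i + 1))) ∨
        p = (Vtx.g n, Vtx.x 1) ∨
        (∃ i, 1 ≤ i ∧ i ≤ m ∧
          (p = (Vtx.x i, Vtx.y i) ∨ p = (Vtx.y i, Vtx.z i) ∨ p = (Vtx.z i, Vtx.w i 1) ∨
           p = (Vtx.w i 1, Vtx.w i 2) ∨ p = (Vtx.w i 2, Vtx.w i 3))) ∨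
        (∃ i, 1 ≤ i ∧ i ≤ m - 1 ∧ p = (Vtx.x i, Vtx.x (i + 1))) }

/-- The set `C = {g₀, g₁, …, g_{n-1}} ∪ {z₁, …, z_m}`. -/
def Cset (n m : ℕ) : Set Vtx :=
  { v | (∃ i, i ≤ n - 1 ∧ v = Vtx.g i) ∨ (∃ i, 1 ≤ i ∧ i ≤ m ∧ v = Vtx.z i) }

/-- The relation `R ⊆ V(G) × E(G)`: `(w_{i,j}, (bₗ, eₗ)) ∈ R` iff `l_{i,j} = xₗ`, and
`(w_{i,j}, (cₗ, fₗ)) ∈ R` iff `l_{i,j} = ¬xₗ`. -/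
def Rrel (lit : ℕ → ℕ → Lit) (m : ℕ) : Set (Vtx × Edge) :=
  { p | ∃ i j, 1 ≤ i ∧ i ≤ m ∧ 1 ≤ j ∧ j ≤ 3 ∧
        ((∃ l, lit i j = Lit.pos l ∧ p = (Vtx.w i j, (Vtx.b l, Vtx.e l))) ∨
         (∃ l, lit i j = Lit.neg l ∧ p = (Vtx.w i j, (Vtx.c l, Vtx.f l)))) }

/-- `Rinv R E = R⁻¹(E)`: the vertices pointing some edge of `E`. -/
def Rinv (R : Set (Vtx × Edge)) (E : Set Edge) : Set Vtx :=
  { v | ∃ e ∈ E, (v, e) ∈ R }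

/-- The set of (directed) edges traversed by a path given as its list of vertices. -/
def pathEdges (p : List Vtx) : Set Edge := { e | e ∈ p.zip p.tail }

/-- A legal move of the graph game from active vertex `u ∈ C` with current edge set `E`
along the directed path `p` (a list of at least two pairwise distinct vertices whose
consecutive pairs are edges of `E`), ending at a vertex `v ∈ C ∪ R⁻¹(E)`, with all
internal vertices of `p` outside `C ∪ R⁻¹(E)`; the resulting edge set `E'` is obtained
by deleting the edges of `p` from `E`. -/
def LegalMoveVia (C : Set Vtx) (R : Set (Vtx × Edge))
    (u : Vtx) (E : Set Edge) (v : Vtx) (E' : Set Edge) (p : List Vtx) : Prop :=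
  u ∈ C ∧ v ∈ C ∪ Rinv R E ∧
  2 ≤ p.length ∧ p.Nodup ∧
  p.head? = some u ∧ p.getLast? = some v ∧
  List.Chain' (fun a b => (a, b) ∈ E) p ∧
  (∀ w ∈ (p.drop 1).dropLast, w ∉ C ∪ Rinv R E) ∧
  E' = E \ pathEdges p

/-- A legal move from `(u, E)` to `(v, E')` (along some path). -/
def LegalMove (C : Set Vtx) (R : Set (Vtx × Edge))
    (u : Vtx) (E : Set Edge) (v : Vtx) (E' : Set Edge) : Prop :=
  ∃ p, LegalMoveVia C R u E v E' p

/-- `MoverWins C R true u E` says that the player to move at the position with active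
vertex `u` and current edge set `E` has a winning strategy; `MoverWins C R false u E`
says that the player to move loses whatever he does (in particular, if he has no legal
move he loses immediately; a move to a vertex of `R⁻¹(E)` wins the game for the mover). -/
inductive MoverWins (C : Set Vtx) (R : Set (Vtx × Edge)) : Bool → Vtx → Set Edge → Prop
  | winsNow {u E v E'} : LegalMove C R u E v E' → v ∈ Rinv R E →
      MoverWins C R true u E
  | winsLater {u E v E'} : LegalMove C R u E v E' → MoverWins C R false v E' →
      MoverWins C R true u E
  | loses {u E} :
      (∀ v E', LegalMove C R u E v E' → v ∉ Rinv R E) →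
      (∀ v E', LegalMove C R u E v E' → MoverWins C R true v E') →
      MoverWins C R false u E

/-- The two players of the graph game. -/
inductive Player where
  | ex | fa
deriving DecidableEq

/-- The opponent of a player. -/
def Player.other : Player → Player
  | .ex => .fa
  | .fa => .ex

/-- A (maximal) play of the graph game on `(G, C, s, R)` starting from active vertex `s`
and edge set `E0`, with the ∃-player moving first.  `act k` and `edg k` are the active
vertex and edge set after `k` moves, `turn k` is the player who makes the `(k+1)`-st
move, and `len` is the total number of moves.  The play stops either because its last
move reached a vertex of `R⁻¹(E)` (the mover wins) or because the player to move has no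
legal move (he loses); before that, no move may end in `R⁻¹(E)` without stopping. -/
structure Play (C : Set Vtx) (R : Set (Vtx × Edge)) (s : Vtx) (E0 : Set Edge) where
  len : ℕ
  act : ℕ → Vtx
  edg : ℕ → Set Edge
  turn : ℕ → Player
  init_act : act 0 = s
  init_edg : edg 0 = E0
  init_turn : turn 0 = Player.ex
  turn_alt : ∀ k, turn (k + 1) = (turn k).other
  step : ∀ k, k < len → LegalMove C R (act k) (edg k) (act (k + 1)) (edg (k + 1))
  not_over : ∀ k, k + 1 < len → act (k + 1) ∉ Rinv R (edg k)
  maximal : (0 < len ∧ act len ∈ Rinv R (edg (len - 1))) ∨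
            (∀ v E', ¬ LegalMove C R (act len) (edg len) v E')

/-! ### Auxiliary development -/

section Aux

/-- A path segment: from entry vertex `u`, the list `q` of subsequent vertices stays
outside `S` until its last vertex, which lies in `S`. -/
def Seg (E : Set Edge) (S : Set Vtx) (u : Vtx) (q : List Vtx) : Prop :=
  q ≠ [] ∧ List.Chain (fun a b => (a, b) ∈ E) u q ∧
  (∀ w ∈ q.dropLast, w ∉ S) ∧ (∀ v, q.getLast? = some v → v ∈ S)

lemma seg_cases {E : Set Edge} {S : Set Vtx} {u : Vtx} {q : List Vtx}
    (h : Seg E S u q) :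
    ∃ w q', q = w :: q' ∧ (u, w) ∈ E ∧
      ((w ∈ S ∧ q' = []) ∨ (w ∉ S ∧ Seg E S w q')) := by
  obtain ⟨hne, hch, hdl, hlast⟩ := h
  cases q with
  | nil => exact absurd rfl hne
  | cons w q' =>
    rcases List.chain_cons.mp hch with ⟨he, hch'⟩
    refine ⟨w, q', rfl, he, ?_⟩
    cases q' with
    | nil =>
      left
      exact ⟨hlast w rfl, rfl⟩
    | cons b q'' =>
      right
      have hwn : w ∉ S := hdl w (by simp)
      refine ⟨hwn, by simp, hch', ?_, ?_⟩
      · intro v hv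
        exact hdl v (by simp [List.dropLast_cons₂] at hv ⊢; tauto)
      · intro v hv
        apply hlast
        simpa using hv
  
lemma seg_of_legal {C : Set Vtx} {R : Set (Vtx × Edge)} {u v : Vtx} {E E' : Set Edge}
    {p : List Vtx} (h : LegalMoveVia C R u E v E' p) :
    ∃ q, p = u :: q ∧ Seg E (C ∪ Rinv R E) u q ∧ q.getLast? = some v := by
  obtain ⟨-, hv, hlen, -, hhead, hlast, hch, hint, -⟩ := h
  cases p with
  | nil => simp at hhead
  | cons u' q =>
    obtain rfl : u' = u := by simpa using hhead
    have hqne : q ≠ [] := by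
      intro hq; subst hq; simp at hlen
    have hlast' : q.getLast? = some v := by
      rw [List.getLast?_cons] at hlast
      cases q with
      | nil => exact absurd rfl hqne
      | cons b q'' => simpa [List.getLast?_cons] using hlast
    refine ⟨q, rfl, ⟨hqne, hch, ?_, ?_⟩, hlast'⟩
    · intro w hw; exact hint w (by simpa using hw)
    · intro v' hv'
      rw [hlast'] at hv'
      cases hv'; exact hv

/-- Vertices in `Rinv (Rrel lit m) E` are `w`-vertices. -/
lemma rinv_shape {lit : ℕ → ℕ → Lit} {m : ℕ} {E : Set Edge} {v : Vtx}
    (h : v ∈ Rinv (Rrel lit m) E) :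
    ∃ i j, 1 ≤ i ∧ i ≤ m ∧ 1 ≤ j ∧ j ≤ 3 ∧ v = Vtx.w i j := by
  obtain ⟨e, -, hr⟩ := h
  obtain ⟨i, j, h1, h2, h3, h4, hc⟩ := hr
  rcases hc with ⟨l, -, hp⟩ | ⟨l, -, hp⟩ <;>
    exact ⟨i, j, h1, h2, h3, h4, (Prod.mk.injEq _ _ _ _ ▸ hp).1⟩

end Aux
section Aux2

variable {n m : ℕ}

lemma eg_out_a {i : ℕ} {v : Vtx} (h : (Vtx.a i, v) ∈ EG n m) :
    v = Vtx.b i ∨ v = Vtx.c i := by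
  simp only [EG, Set.mem_setOf_eq, Prod.mk.injEq] at h
  aesop

lemma eg_out_b {i : ℕ} {v : Vtx} (h : (Vtx.b i, v) ∈ EG n m) : v = Vtx.e i := by
  simp only [EG, Set.mem_setOf_eq, Prod.mk.injEq] at h
  aesop

lemma eg_out_c {i : ℕ} {v : Vtx} (h : (Vtx.c i, v) ∈ EG n m) : v = Vtx.f i := by
  simp only [EG, Set.mem_setOf_eq, Prod.mk.injEq] at h
  aesop

lemma eg_out_e {i : ℕ} {v : Vtx} (h : (Vtx.e i, v) ∈ EG n m) : v = Vtx.d i := by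
  simp only [EG, Set.mem_setOf_eq, Prod.mk.injEq] at h
  aesop

lemma eg_out_f {i : ℕ} {v : Vtx} (h : (Vtx.f i, v) ∈ EG n m) : v = Vtx.d i := by
  simp only [EG, Set.mem_setOf_eq, Prod.mk.injEq] at h
  aesop

lemma eg_out_d {i : ℕ} {v : Vtx} (h : (Vtx.d i, v) ∈ EG n m) : v = Vtx.g i := by
  simp only [EG, Set.mem_setOf_eq, Prod.mk.injEq] at h
  aesop

lemma eg_out_g {i : ℕ} {v : Vtx} (h : (Vtx.g i, v) ∈ EG n m) :
    (i ≤ n - 1 ∧ v = Vtx.a (i + 1)) ∨ (i = n ∧ v = Vtx.x 1) := by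
  simp only [EG, Set.mem_setOf_eq, Prod.mk.injEq] at h
  aesop

lemma eg_out_x {i : ℕ} {v : Vtx} (h : (Vtx.x i, v) ∈ EG n m) :
    v = Vtx.y i ∨ v = Vtx.x (i + 1) := by
  simp only [EG, Set.mem_setOf_eq, Prod.mk.injEq] at h
  aesop

lemma eg_out_y {i : ℕ} {v : Vtx} (h : (Vtx.y i, v) ∈ EG n m) : v = Vtx.z i := by
  simp only [EG, Set.mem_setOf_eq, Prod.mk.injEq] at h
  aesop

lemma eg_out_z {i : ℕ} {v : Vtx} (h : (Vtx.z i, v) ∈ EG n m) : v = Vtx.w i 1 := by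
  simp only [EG, Set.mem_setOf_eq, Prod.mk.injEq] at h
  aesop

lemma eg_out_w {i j : ℕ} {v : Vtx} (h : (Vtx.w i j, v) ∈ EG n m) :
    (j = 1 ∧ v = Vtx.w i 2) ∨ (j = 2 ∧ v = Vtx.w i 3) := by
  simp only [EG, Set.mem_setOf_eq, Prod.mk.injEq] at h
  aesop

end Aux2
section Aux3

variable {n m : ℕ} {lit : ℕ → ℕ → Lit}

/-- The edges deleted when the variable gadget `G(x_l)` is traversed, the branch being
determined by `σ l` (`true` ↔ the `c`-branch is taken, so that `(b_l, e_l)` survives). -/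
def gadgetUsed (σ : ℕ → Bool) (l : ℕ) : Set Edge :=
  {e | e = (Vtx.g (l - 1), Vtx.a l) ∨ e = (Vtx.d l, Vtx.g l) ∨
       (σ l = true ∧ (e = (Vtx.a l, Vtx.c l) ∨ e = (Vtx.c l, Vtx.f l) ∨
          e = (Vtx.f l, Vtx.d l))) ∨
       (σ l = false ∧ (e = (Vtx.a l, Vtx.b l) ∨ e = (Vtx.b l, Vtx.e l) ∨
          e = (Vtx.e l, Vtx.d l)))}

/-- The edge set after the first `k` variable gadgets have been traversed according
to `σ`. -/
def Estate (n m k : ℕ) (σ : ℕ → Bool) : Set Edge :=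
  {e | e ∈ EG n m ∧ ∀ l, 1 ≤ l → l ≤ k → e ∉ gadgetUsed σ l}

lemma gadgetUsed_congr {σ σ' : ℕ → Bool} {l : ℕ} (h : σ l = σ' l) :
    gadgetUsed σ l = gadgetUsed σ' l := by
  unfold gadgetUsed; rw [h]

lemma Estate_congr {σ σ' : ℕ → Bool} {k : ℕ} (h : ∀ l, 1 ≤ l → l ≤ k → σ l = σ' l) :
    Estate n m k σ = Estate n m k σ' := by
  unfold Estate
  ext e
  simp only [Set.mem_setOf_eq, and_congr_right_iff]
  intro _
  constructor <;> intro h' l h1 h2 <;>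
    [rw [← gadgetUsed_congr (h l h1 h2)]; rw [gadgetUsed_congr (h l h1 h2)]] <;>
    exact h' l h1 h2

lemma Estate_zero (σ : ℕ → Bool) : Estate n m 0 σ = EG n m := by
  ext e; simp [Estate]; omega

lemma Estate_sub_EG {k : ℕ} {σ : ℕ → Bool} : Estate n m k σ ⊆ EG n m :=
  fun _ h => h.1

lemma rinv_w_only {E : Set Edge} {v : Vtx} (h : v ∈ Rinv (Rrel lit m) E) :
    ∃ i' j', v = Vtx.w i' j' := by
  obtain ⟨i, j, -, -, -, -, h⟩ := rinv_shape h
  exact ⟨i, j, h⟩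

lemma notin_S {E : Set Edge} {v : Vtx} (hn : 1 ≤ n)
    (hv : (∃ i, v = Vtx.a i) ∨ (∃ i, v = Vtx.b i) ∨ (∃ i, v = Vtx.c i) ∨
      (∃ i, v = Vtx.d i) ∨ (∃ i, v = Vtx.e i) ∨ (∃ i, v = Vtx.f i) ∨
      (∃ i, v = Vtx.x i) ∨ (∃ i, v = Vtx.y i) ∨ v = Vtx.g n) :
    v ∉ Cset n m ∪ Rinv (Rrel lit m) E := by
  rintro (hC | hR)
  · rcases hC with ⟨i', hi', hE⟩ | ⟨i', -, -, hE⟩ <;>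
      (rcases hv with ⟨i,rfl⟩|⟨i,rfl⟩|⟨i,rfl⟩|⟨i,rfl⟩|⟨i,rfl⟩|⟨i,rfl⟩|⟨i,rfl⟩|⟨i,rfl⟩|rfl <;>
        simp_all <;> omega)
  · obtain ⟨i', j', hE⟩ := rinv_w_only hR
    rcases hv with ⟨i,rfl⟩|⟨i,rfl⟩|⟨i,rfl⟩|⟨i,rfl⟩|⟨i,rfl⟩|⟨i,rfl⟩|⟨i,rfl⟩|⟨i,rfl⟩|rfl <;>
      simp_all

lemma g_mem_C {k : ℕ} (hk : k ≤ n - 1) : Vtx.g k ∈ Cset n m :=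
  Or.inl ⟨k, hk, rfl⟩

lemma z_mem_C {t : ℕ} (h1 : 1 ≤ t) (h2 : t ≤ m) : Vtx.z t ∈ Cset n m :=
  Or.inr ⟨t, h1, h2, rfl⟩

lemma w_notin_C {i j : ℕ} : Vtx.w i j ∉ Cset n m := by
  rintro (⟨i', -, h⟩ | ⟨i', -, -, h⟩) <;> simp at h

end Aux3
section Aux4

variable {n m : ℕ} {lit : ℕ → ℕ → Lit}

lemma mem_gadgetUsed_fst {e : Edge} {σ : ℕ → Bool} {l : ℕ} (h : e ∈ gadgetUsed σ l) :
    e.1 = Vtx.g (l - 1) ∨ e.1 = Vtx.a l ∨ e.1 = Vtx.b l ∨ e.1 = Vtx.c l ∨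
      e.1 = Vtx.e l ∨ e.1 = Vtx.f l ∨ e.1 = Vtx.d l := by
  rcases h with rfl | rfl | ⟨-, rfl | rfl | rfl⟩ | ⟨-, rfl | rfl | rfl⟩ <;> simp

/-- The edges of gadget `k+1` (and the connector from `g k`) are untouched in
`Estate n m k σ`. -/
lemma gadget_edge_free {σ : ℕ → Bool} {l k : ℕ} (h1 : 1 ≤ l) (h2 : l ≤ k) {e : Edge}
    (he : e.1 = Vtx.g k ∨ e.1 = Vtx.a (k+1) ∨ e.1 = Vtx.b (k+1) ∨ e.1 = Vtx.c (k+1) ∨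
      e.1 = Vtx.e (k+1) ∨ e.1 = Vtx.f (k+1) ∨ e.1 = Vtx.d (k+1)) :
    e ∉ gadgetUsed σ l := by
  intro h
  have h' := mem_gadgetUsed_fst h
  rcases he with he | he | he | he | he | he | he <;>
    rcases h' with h' | h' | h' | h' | h' | h' | h' <;> rw [he] at h' <;> simp at h' <;>
    omega

/-- Edges whose source is in the formula component (or `g n`) are never deleted by
gadget traversals. -/
lemma formula_edge_free {σ : ℕ → Bool} {l : ℕ} (h1 : 1 ≤ l) (h2 : l ≤ n - 1) {e : Edge}
    (he : e.1 = Vtx.g n ∨ (∃ i, e.1 = Vtx.x i) ∨ (∃ i, e.1 = Vtx.y i) ∨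
      (∃ i, e.1 = Vtx.z i) ∨ (∃ i j, e.1 = Vtx.w i j)) (hn2 : 2 ≤ n) :
    e ∉ gadgetUsed σ l := by
  intro h
  have h' := mem_gadgetUsed_fst h
  rcases he with he | ⟨i, he⟩ | ⟨i, he⟩ | ⟨i, he⟩ | ⟨i, j, he⟩ <;>
    rcases h' with h' | h' | h' | h' | h' | h' | h' <;> rw [he] at h' <;> simp at h' <;>
    omega

lemma mem_Estate {e : Edge} {k : ℕ} {σ : ℕ → Bool} :
    e ∈ Estate n m k σ ↔ e ∈ EG n m ∧ ∀ l, 1 ≤ l → l ≤ k → e ∉ gadgetUsed σ l :=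
  Iff.rfl

/-- The branch vertex (`c` if `true`, `b` if `false`). -/
def bee (l : ℕ) (bb : Bool) : Vtx := if bb then Vtx.c l else Vtx.b l
def eff (l : ℕ) (bb : Bool) : Vtx := if bb then Vtx.f l else Vtx.e l

/-- The path through gadget `k+1` taking branch `bb`. -/
def gpath (k : ℕ) (bb : Bool) : List Vtx :=
  [Vtx.g k, Vtx.a (k+1), bee (k+1) bb, eff (k+1) bb, Vtx.d (k+1), Vtx.g (k+1)]

lemma Estate_succ {k : ℕ} {σ' : ℕ → Bool} :
    Estate n m (k+1) σ' = Estate n m k σ' \ gadgetUsed σ' (k+1) := by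
  ext e
  simp only [mem_Estate, Set.mem_diff]
  constructor
  · rintro ⟨h1, h2⟩
    exact ⟨⟨h1, fun l hl1 hl2 => h2 l hl1 (by omega)⟩, h2 (k+1) (by omega) le_rfl⟩
  · rintro ⟨⟨h1, h2⟩, h3⟩
    refine ⟨h1, fun l hl1 hl2 => ?_⟩
    rcases Nat.lt_or_ge l (k+1) with h | h
    · exact h2 l hl1 (by omega)
    · have : l = k + 1 := by omega
      subst this; exact h3

lemma pathEdges_gpath {k : ℕ} {σ' : ℕ → Bool} {bb : Bool} (hb : σ' (k+1) = bb) :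
    pathEdges (gpath k bb) = gadgetUsed σ' (k+1) := by
  cases bb <;>
  · ext e
    simp [pathEdges, gpath, bee, eff, gadgetUsed, hb]
    tauto

lemma estate_step {k : ℕ} {σ : ℕ → Bool} {bb : Bool} :
    Estate n m k σ \ pathEdges (gpath k bb)
      = Estate n m (k+1) (Function.update σ (k+1) bb) := by
  have h1 : Estate n m k (Function.update σ (k+1) bb) = Estate n m k σ :=
    Estate_congr (fun l hl1 hl2 => Function.update_of_ne (show l ≠ k+1 by omega) _ _)
  have h2 : pathEdges (gpath k bb) = gadgetUsed (Function.update σ (k+1) bb) (k+1) :=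
    pathEdges_gpath (Function.update_self _ _ _)
  rw [Estate_succ, h1, h2]

end Aux4
section Aux5

variable {n m : ℕ} {lit : ℕ → ℕ → Lit}

lemma eg_ga {k : ℕ} (hk : k ≤ n - 1) : (Vtx.g k, Vtx.a (k+1)) ∈ EG n m :=
  Or.inr (Or.inl ⟨k, hk, rfl⟩)

lemma eg_ab {l : ℕ} (h1 : 1 ≤ l) (h2 : l ≤ n) : (Vtx.a l, Vtx.b l) ∈ EG n m :=
  Or.inl ⟨l, h1, h2, Or.inl rfl⟩
lemma eg_ac {l : ℕ} (h1 : 1 ≤ l) (h2 : l ≤ n) : (Vtx.a l, Vtx.c l) ∈ EG n m :=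
  Or.inl ⟨l, h1, h2, Or.inr (Or.inl rfl)⟩
lemma eg_be {l : ℕ} (h1 : 1 ≤ l) (h2 : l ≤ n) : (Vtx.b l, Vtx.e l) ∈ EG n m :=
  Or.inl ⟨l, h1, h2, Or.inr (Or.inr (Or.inl rfl))⟩
lemma eg_cf {l : ℕ} (h1 : 1 ≤ l) (h2 : l ≤ n) : (Vtx.c l, Vtx.f l) ∈ EG n m :=
  Or.inl ⟨l, h1, h2, Or.inr (Or.inr (Or.inr (Or.inl rfl)))⟩
lemma eg_ed {l : ℕ} (h1 : 1 ≤ l) (h2 : l ≤ n) : (Vtx.e l, Vtx.d l) ∈ EG n m :=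
  Or.inl ⟨l, h1, h2, Or.inr (Or.inr (Or.inr (Or.inr (Or.inl rfl))))⟩
lemma eg_fd {l : ℕ} (h1 : 1 ≤ l) (h2 : l ≤ n) : (Vtx.f l, Vtx.d l) ∈ EG n m :=
  Or.inl ⟨l, h1, h2, Or.inr (Or.inr (Or.inr (Or.inr (Or.inr (Or.inl rfl)))))⟩
lemma eg_dg {l : ℕ} (h1 : 1 ≤ l) (h2 : l ≤ n) : (Vtx.d l, Vtx.g l) ∈ EG n m :=
  Or.inl ⟨l, h1, h2, Or.inr (Or.inr (Or.inr (Or.inr (Or.inr (Or.inr rfl)))))⟩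
lemma eg_gx : (Vtx.g n, Vtx.x 1) ∈ EG n m := Or.inr (Or.inr (Or.inl rfl))
lemma eg_xy {t : ℕ} (h1 : 1 ≤ t) (h2 : t ≤ m) : (Vtx.x t, Vtx.y t) ∈ EG n m :=
  Or.inr (Or.inr (Or.inr (Or.inl ⟨t, h1, h2, Or.inl rfl⟩)))
lemma eg_yz {t : ℕ} (h1 : 1 ≤ t) (h2 : t ≤ m) : (Vtx.y t, Vtx.z t) ∈ EG n m :=
  Or.inr (Or.inr (Or.inr (Or.inl ⟨t, h1, h2, Or.inr (Or.inl rfl)⟩)))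
lemma eg_xx {t : ℕ} (h1 : 1 ≤ t) (h2 : t ≤ m - 1) : (Vtx.x t, Vtx.x (t+1)) ∈ EG n m :=
  Or.inr (Or.inr (Or.inr (Or.inr ⟨t, h1, h2, rfl⟩)))

/-- Gadget-(k+1) edges are in `Estate n m k σ`. -/
lemma gadget_mem_Estate {k : ℕ} {σ : ℕ → Bool} {e : Edge}
    (heg : e ∈ EG n m)
    (he : e.1 = Vtx.g k ∨ e.1 = Vtx.a (k+1) ∨ e.1 = Vtx.b (k+1) ∨ e.1 = Vtx.c (k+1) ∨
      e.1 = Vtx.e (k+1) ∨ e.1 = Vtx.f (k+1) ∨ e.1 = Vtx.d (k+1)) :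
    e ∈ Estate n m k σ :=
  ⟨heg, fun l h1 h2 => gadget_edge_free h1 h2 he⟩

/-- The constructed traversal of gadget `k+1` is a legal move. -/
lemma gadget_move_mk (hn2 : 2 ≤ n) {k : ℕ} (hk : k + 2 ≤ n) (σ : ℕ → Bool) (bb : Bool) :
    LegalMoveVia (Cset n m) (Rrel lit m) (Vtx.g k) (Estate n m k σ) (Vtx.g (k+1))
      (Estate n m (k+1) (Function.update σ (k+1) bb)) (gpath k bb) := by
  have hkn : k ≤ n - 1 := by omega
  have hkn1 : k + 1 ≤ n - 1 := by omega
  have h1n : (1:ℕ) ≤ n := by omega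
  refine ⟨g_mem_C hkn, Or.inl (g_mem_C hkn1), ?_, ?_, ?_, ?_, ?_, ?_, estate_step.symm⟩
  · cases bb <;> simp [gpath, bee, eff]
  · cases bb <;> simp [gpath, bee, eff] <;> omega
  · cases bb <;> simp [gpath, bee, eff]
  · cases bb <;> simp [gpath, bee, eff]
  · cases bb <;> simp only [gpath, bee, eff, if_true, if_false, Bool.false_eq_true,
      List.Chain', List.isChain_cons_cons, List.isChain_singleton, and_true] <;>
      refine ⟨?_, ?_, ?_, ?_, ?_⟩ <;>
      apply gadget_mem_Estate <;>
      first
        | (left; rfl)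
        | (right; left; rfl) | (right; right; left; rfl)
        | (right; right; right; left; rfl)
        | (right; right; right; right; left; rfl)
        | (right; right; right; right; right; left; rfl)
        | (right; right; right; right; right; right; rfl)
        | exact eg_ga hkn | exact eg_ab (by omega) (by omega)
        | exact eg_ac (by omega) (by omega) | exact eg_be (by omega) (by omega)
        | exact eg_cf (by omega) (by omega) | exact eg_ed (by omega) (by omega)
        | exact eg_fd (by omega) (by omega) | exact eg_dg (by omega) (by omega)
  · intro w hw
    have hw' : w = Vtx.a (k+1) ∨ w = bee (k+1) bb ∨ w = eff (k+1) bb ∨ w = Vtx.d (k+1) := by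
      cases bb <;> simpa [gpath, bee, eff] using hw
    cases bb <;> rcases hw' with rfl | rfl | rfl | rfl <;>
      apply notin_S h1n <;> simp [bee, eff]

end Aux5
section Aux6

variable {n m : ℕ} {lit : ℕ → ℕ → Lit}

lemma gadget_move_char (hn2 : 2 ≤ n) {k : ℕ} (hk : k + 2 ≤ n) {σ : ℕ → Bool}
    {v : Vtx} {E' : Set Edge}
    (h : LegalMove (Cset n m) (Rrel lit m) (Vtx.g k) (Estate n m k σ) v E') :
    ∃ bb, v = Vtx.g (k+1) ∧ E' = Estate n m (k+1) (Function.update σ (k+1) bb) := by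
  have h1n : (1:ℕ) ≤ n := by omega
  obtain ⟨p, hvia⟩ := h
  have hE' : E' = Estate n m k σ \ pathEdges p := hvia.2.2.2.2.2.2.2.2
  obtain ⟨q, rfl, hseg, hlast⟩ := seg_of_legal hvia
  set S := Cset n m ∪ Rinv (Rrel lit m) (Estate n m k σ) with hS
  -- step 1 : to a (k+1)
  obtain ⟨w1, q1, rfl, he1, hc1⟩ := seg_cases hseg
  have hw1 : w1 = Vtx.a (k+1) := by
    rcases eg_out_g (Estate_sub_EG he1) with ⟨-, h'⟩ | ⟨h', -⟩
    · exact h'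
    · omega
  subst hw1
  rcases hc1 with ⟨hmem, -⟩ | ⟨-, hseg1⟩
  · exact absurd hmem (notin_S h1n (by simp))
  -- step 2 : to b or c
  obtain ⟨w2, q2, rfl, he2, hc2⟩ := seg_cases hseg1
  rcases eg_out_a (Estate_sub_EG he2) with hw2 | hw2 <;> subst hw2
  · -- b branch, bb = false
    rcases hc2 with ⟨hmem, -⟩ | ⟨-, hseg2⟩
    · exact absurd hmem (notin_S h1n (by simp))
    obtain ⟨w3, q3, rfl, he3, hc3⟩ := seg_cases hseg2
    have hw3 := eg_out_b (Estate_sub_EG he3); subst hw3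
    rcases hc3 with ⟨hmem, -⟩ | ⟨-, hseg3⟩
    · exact absurd hmem (notin_S h1n (by simp))
    obtain ⟨w4, q4, rfl, he4, hc4⟩ := seg_cases hseg3
    have hw4 := eg_out_e (Estate_sub_EG he4); subst hw4
    rcases hc4 with ⟨hmem, -⟩ | ⟨-, hseg4⟩
    · exact absurd hmem (notin_S h1n (by simp))
    obtain ⟨w5, q5, rfl, he5, hc5⟩ := seg_cases hseg4
    have hw5 := eg_out_d (Estate_sub_EG he5); subst hw5
    rcases hc5 with ⟨-, rfl⟩ | ⟨hmem, -⟩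
    · refine ⟨false, (show Vtx.g (k+1) = v by simpa using hlast).symm, ?_⟩
      rw [hE', show Vtx.g k :: Vtx.a (k+1) :: Vtx.b (k+1) :: Vtx.e (k+1) ::
        Vtx.d (k+1) :: [Vtx.g (k+1)] = gpath k false from by simp [gpath, bee, eff],
        estate_step]
    · exact absurd (Or.inl (g_mem_C (show k + 1 ≤ n - 1 by omega))) hmem
  · -- c branch, bb = true
    rcases hc2 with ⟨hmem, -⟩ | ⟨-, hseg2⟩
    · exact absurd hmem (notin_S h1n (by simp))
    obtain ⟨w3, q3, rfl, he3, hc3⟩ := seg_cases hseg2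
    have hw3 := eg_out_c (Estate_sub_EG he3); subst hw3
    rcases hc3 with ⟨hmem, -⟩ | ⟨-, hseg3⟩
    · exact absurd hmem (notin_S h1n (by simp))
    obtain ⟨w4, q4, rfl, he4, hc4⟩ := seg_cases hseg3
    have hw4 := eg_out_f (Estate_sub_EG he4); subst hw4
    rcases hc4 with ⟨hmem, -⟩ | ⟨-, hseg4⟩
    · exact absurd hmem (notin_S h1n (by simp))
    obtain ⟨w5, q5, rfl, he5, hc5⟩ := seg_cases hseg4
    have hw5 := eg_out_d (Estate_sub_EG he5); subst hw5
    rcases hc5 with ⟨-, rfl⟩ | ⟨hmem, -⟩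
    · refine ⟨true, (show Vtx.g (k+1) = v by simpa using hlast).symm, ?_⟩
      rw [hE', show Vtx.g k :: Vtx.a (k+1) :: Vtx.c (k+1) :: Vtx.f (k+1) ::
        Vtx.d (k+1) :: [Vtx.g (k+1)] = gpath k true from by simp [gpath, bee, eff],
        estate_step]
    · exact absurd (Or.inl (g_mem_C (show k + 1 ≤ n - 1 by omega))) hmem

end Aux6
section Aux7

variable {n m : ℕ} {lit : ℕ → ℕ → Lit}

/-- The list `[x s, x (s+1), …, x t]`. -/
def xseg (s t : ℕ) : List Vtx := (List.range' s (t + 1 - s)).map Vtx.x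

lemma mem_xseg {s t : ℕ} {v : Vtx} (h : v ∈ xseg s t) :
    ∃ i, s ≤ i ∧ i ≤ t ∧ v = Vtx.x i := by
  simp only [xseg, List.mem_map, List.mem_range'_1] at h
  obtain ⟨i, ⟨h1, h2⟩, rfl⟩ := h
  exact ⟨i, h1, by omega, rfl⟩

lemma xseg_nodup {s t : ℕ} : (xseg s t).Nodup :=
  (List.nodup_range' (s := s)).map (fun _ _ h => by simpa using h)

lemma xseg_cons {s t : ℕ} (h : s ≤ t) : xseg s t = Vtx.x s :: xseg (s+1) t := by
  unfold xseg
  rw [show t + 1 - s = (t - s) + 1 by omega, List.range'_succ]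
  simp [show t + 1 - (s + 1) = t - s by omega]

lemma xseg_nil {s t : ℕ} (h : t < s) : xseg s t = [] := by
  unfold xseg
  rw [show t + 1 - s = 0 by omega]
  simp

lemma xchain {E : Set Edge} {t : ℕ}
    (hxy : (Vtx.x t, Vtx.y t) ∈ E) (hyz : (Vtx.y t, Vtx.z t) ∈ E)
    (hxx : ∀ i, 1 ≤ i → i < t → (Vtx.x i, Vtx.x (i+1)) ∈ E) :
    ∀ d s u, t - s = d → 1 ≤ s → s ≤ t → (u, Vtx.x s) ∈ E →
      List.Chain (fun a b => (a, b) ∈ E) u ((xseg s t ++ [Vtx.y t]) ++ [Vtx.z t]) := by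
  intro d
  induction d with
  | zero =>
    intro s u hd h1 h2 hu
    have hst : s = t := by omega
    subst hst
    rw [xseg_cons le_rfl, xseg_nil (by omega)]
    simpa [List.Chain] using (And.intro hu (And.intro hxy hyz))
  | succ d ih =>
    intro s u hd h1 h2 hu
    have hlt : s < t := by omega
    rw [xseg_cons (by omega)]
    simp only [List.cons_append, List.chain_cons]
    exact List.chain_cons.mpr ⟨hu, ih (s+1) (Vtx.x s) (by omega) (by omega) (by omega) (hxx s h1 hlt)⟩

lemma xseg_chain_shape : True := trivial

end Aux7
section Aux8

variable {n m : ℕ} {lit : ℕ → ℕ → Lit}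

lemma pathEdges_append_left (l₁ l₂ : List Vtx) : pathEdges l₁ ⊆ pathEdges (l₁ ++ l₂) := by
  induction l₁ with
  | nil => simp [pathEdges]
  | cons a l ih =>
    cases l with
    | nil => intro e he; simp [pathEdges] at he
    | cons b l' =>
      intro e he
      simp only [pathEdges, Set.mem_setOf_eq, List.cons_append, List.tail,
        List.zip_cons_cons, List.mem_cons] at he ⊢
      rcases he with rfl | he
      · left; rfl
      · right; exact ih he

/-- The final (n-th) move path: through gadget `k+1 = n`, then along the `x`-spine to
clause `t`. -/
def fpath (k : ℕ) (bb : Bool) (t : ℕ) : List Vtx :=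
  (gpath k bb ++ (xseg 1 t ++ [Vtx.y t])) ++ [Vtx.z t]

lemma formula_mem_Estate {k : ℕ} (hn2 : 2 ≤ n) (hk : k + 1 = n) {σ : ℕ → Bool} {e : Edge}
    (heg : e ∈ EG n m)
    (he : e.1 = Vtx.g n ∨ (∃ i, e.1 = Vtx.x i) ∨ (∃ i, e.1 = Vtx.y i) ∨
      (∃ i, e.1 = Vtx.z i) ∨ (∃ i j, e.1 = Vtx.w i j)) :
    e ∈ Estate n m k σ :=
  ⟨heg, fun l h1 h2 => formula_edge_free h1 (by omega) he hn2⟩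

lemma final_move_mk (hn2 : 2 ≤ n) {k : ℕ} (hk : k + 1 = n) (σ : ℕ → Bool) (bb : Bool)
    {t : ℕ} (ht1 : 1 ≤ t) (ht2 : t ≤ m) :
    LegalMoveVia (Cset n m) (Rrel lit m) (Vtx.g k) (Estate n m k σ) (Vtx.z t)
      (Estate n m k σ \ pathEdges (fpath k bb t)) (fpath k bb t) := by
  have hkn : k ≤ n - 1 := by omega
  have hgn : Vtx.g n = Vtx.g (k+1) := by rw [hk]
  refine ⟨g_mem_C hkn, Or.inl (z_mem_C ht1 ht2), ?_, ?_, ?_, ?_, ?_, ?_, rfl⟩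
  · simp [fpath, gpath]
  · -- Nodup
    rw [fpath, List.nodup_append, List.nodup_append, List.nodup_append]
    refine ⟨⟨?_, ⟨xseg_nodup, by simp, ?_⟩, ?_⟩, by simp, ?_⟩
    · cases bb <;> simp [gpath, bee, eff] <;> omega
    · intro v hv v' hv' hvv; rw [← hvv] at hv'
      obtain ⟨i, -, -, rfl⟩ := mem_xseg hv
      simp at hv'
    · intro v hv v' hv' hvv; rw [← hvv] at hv'
      have : (∃ i, v = Vtx.x i) ∨ v = Vtx.y t := by
        rcases List.mem_append.mp hv' with h | h
        · obtain ⟨i, -, -, rfl⟩ := mem_xseg h; exact Or.inl ⟨i, rfl⟩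
        · simp at h; exact Or.inr h
      rcases this with ⟨i, rfl⟩ | rfl <;> cases bb <;> simp [gpath, bee, eff] at hv
    · intro v hv v' hv' hvv; rw [← hvv] at hv'
      simp only [List.mem_singleton] at hv'
      subst hv'
      rcases List.mem_append.mp hv with h | h
      · cases bb <;> simp [gpath, bee, eff] at h
      · rcases List.mem_append.mp h with h | h
        · obtain ⟨i, -, -, h⟩ := mem_xseg h; simp at h
        · simp at h
  · cases bb <;> simp [fpath, gpath, bee, eff]
  · simp [fpath, List.getLast?_concat]
  · -- Chain'
    have hxq : ((gpath k bb ++ (xseg 1 t ++ [Vtx.y t])) ++ [Vtx.z t])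
        = Vtx.g k :: (Vtx.a (k+1) :: bee (k+1) bb :: eff (k+1) bb :: Vtx.d (k+1) ::
          Vtx.g (k+1) :: ((xseg 1 t ++ [Vtx.y t]) ++ [Vtx.z t])) := by
      simp [gpath]
    show List.Chain' _ (fpath k bb t)
    rw [fpath, hxq]
    show List.IsChain _ (Vtx.g k :: _)
    rw [List.chain_cons, List.chain_cons, List.chain_cons, List.chain_cons,
      List.chain_cons]
    refine ⟨?_, ?_, ?_, ?_, ?_, ?_⟩
    · exact gadget_mem_Estate (eg_ga hkn) (Or.inl rfl)
    · cases bb <;> simp only [bee] <;>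
      · refine gadget_mem_Estate ?_ (by simp [bee])
        first
          | exact eg_ab (by omega) (by omega)
          | exact eg_ac (by omega) (by omega)
    · cases bb <;> simp only [bee, eff, if_true, if_false] <;>
      · refine gadget_mem_Estate ?_ (by simp [bee, eff])
        first
          | exact eg_be (by omega) (by omega)
          | exact eg_cf (by omega) (by omega)
    · cases bb <;> simp only [eff, if_true, if_false] <;>
      · refine gadget_mem_Estate ?_ (by simp [eff])
        first
          | exact eg_ed (by omega) (by omega)
          | exact eg_fd (by omega) (by omega)
    · exact gadget_mem_Estate (eg_dg (by omega) (by omega)) (by simp)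
    · refine xchain ?_ ?_ ?_ (t - 1) 1 (Vtx.g (k+1)) rfl le_rfl ht1 ?_
      · exact formula_mem_Estate hn2 hk (eg_xy ht1 ht2) (Or.inr (Or.inl ⟨t, rfl⟩))
      · exact formula_mem_Estate hn2 hk (eg_yz ht1 ht2)
          (Or.inr (Or.inr (Or.inl ⟨t, rfl⟩)))
      · intro i h1 h2
        exact formula_mem_Estate hn2 hk (eg_xx h1 (by omega)) (Or.inr (Or.inl ⟨i, rfl⟩))
      · rw [← hgn]
        exact formula_mem_Estate hn2 hk eg_gx (Or.inl rfl)
  · -- internal vertices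
    intro v hv
    have h1n : (1:ℕ) ≤ n := by omega
    have hfp : fpath k bb t = Vtx.g k :: (((Vtx.a (k+1) :: bee (k+1) bb :: eff (k+1) bb ::
        Vtx.d (k+1) :: Vtx.g (k+1) :: []) ++ (xseg 1 t ++ [Vtx.y t])) ++ [Vtx.z t]) := by
      simp [fpath, gpath]
    rw [hfp] at hv
    have hv' : v ∈ (Vtx.a (k+1) :: bee (k+1) bb :: eff (k+1) bb :: Vtx.d (k+1) ::
        Vtx.g (k+1) :: []) ++ (xseg 1 t ++ [Vtx.y t]) := by
      simpa only [List.drop_succ_cons, List.drop_zero, List.dropLast_concat] using hv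
    rcases List.mem_append.mp hv' with h | h
    · simp only [List.mem_cons, List.not_mem_nil, or_false] at h
      rcases h with rfl | rfl | rfl | rfl | rfl <;>
        [skip; skip; skip; skip; (rw [← hgn]; exact notin_S h1n (by simp))] <;>
        cases bb <;> apply notin_S h1n <;> simp [bee, eff]
    · rcases List.mem_append.mp h with h | h
      · obtain ⟨i, -, -, rfl⟩ := mem_xseg h
        exact notin_S h1n (by simp)
      · simp only [List.mem_singleton] at h
        subst h
        exact notin_S h1n (by simp)

lemma final_state_sub (hn2 : 2 ≤ n) {k : ℕ} (hk : k + 1 = n) {σ : ℕ → Bool} {bb : Bool}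
    {t : ℕ} :
    Estate n m k σ \ pathEdges (fpath k bb t)
      ⊆ Estate n m (k+1) (Function.update σ (k+1) bb) := by
  rintro e ⟨⟨hEG, hfree⟩, hnp⟩
  refine ⟨hEG, fun l h1 h2 => ?_⟩
  rcases Nat.lt_or_ge l (k+1) with hl | hl
  · rw [gadgetUsed_congr (σ' := σ) (Function.update_of_ne (show l ≠ k+1 by omega) _ _)]
    exact hfree l h1 (by omega)
  · have : l = k + 1 := by omega
    subst this
    intro hmem
    apply hnp
    rw [← pathEdges_gpath (σ' := Function.update σ (k+1) bb)
      (Function.update_self _ _ _)] at hmem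
    rw [fpath, List.append_assoc]
    exact pathEdges_append_left _ _ hmem

end Aux8
section Aux9

variable {n m : ℕ} {lit : ℕ → ℕ → Lit}

lemma eval_of_rinv (hwf : LitWF n m lit) {σ' : ℕ → Bool} {t j : ℕ}
    (ht1 : 1 ≤ t) (ht2 : t ≤ m) (hj1 : 1 ≤ j) (hj2 : j ≤ 3)
    {E'' : Set Edge} (hsub : E'' ⊆ Estate n m n σ')
    (h : Vtx.w t j ∈ Rinv (Rrel lit m) E'') :
    (lit t j).eval σ' = true := by
  obtain ⟨e, heE, hR⟩ := h
  obtain ⟨i', j', -, -, -, -, hc⟩ := hR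
  have hvar := hwf t j ht1 ht2 hj1 hj2
  rcases hc with ⟨l, hl, hp⟩ | ⟨l, hl, hp⟩ <;>
    simp only [Prod.mk.injEq, Vtx.w.injEq] at hp <;>
    obtain ⟨⟨rfl, rfl⟩, rfl⟩ := hp <;>
    obtain ⟨-, hfree⟩ := hsub heE <;>
    rw [hl] at hvar ⊢ <;> simp only [Lit.var] at hvar <;>
    simp only [Lit.eval]
  · -- positive literal: (b l, e l) survives, so σ' l = true
    by_contra hfalse
    exact hfree l hvar.1 hvar.2
      (Or.inr (Or.inr (Or.inr ⟨by simpa using hfalse, Or.inr (Or.inl rfl)⟩)))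
  · -- negative literal: (c l, f l) survives, so σ' l = false
    by_contra hfalse
    exact hfree l hvar.1 hvar.2
      (Or.inr (Or.inr (Or.inl ⟨by simpa using hfalse, Or.inr (Or.inl rfl)⟩)))

lemma clause_true_of_win (hwf : LitWF n m lit) {σ' : ℕ → Bool} {t : ℕ}
    (ht1 : 1 ≤ t) (ht2 : t ≤ m) {E'' : Set Edge} (hsub : E'' ⊆ Estate n m n σ')
    (hw : MoverWins (Cset n m) (Rrel lit m) true (Vtx.z t) E'') :
    ClauseTrue lit t σ' := by
  have hEsub : E'' ⊆ EG n m := fun e he => (hsub he).1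
  have hmv : ∃ v E₂, LegalMove (Cset n m) (Rrel lit m) (Vtx.z t) E'' v E₂ := by
    cases hw with
    | winsNow h _ => exact ⟨_, _, h⟩
    | winsLater h _ => exact ⟨_, _, h⟩
  obtain ⟨v, E₂, p, hvia⟩ := hmv
  have hvS : v ∈ Cset n m ∪ Rinv (Rrel lit m) E'' := hvia.2.1
  obtain ⟨q, rfl, hseg, hlast⟩ := seg_of_legal hvia
  have hrinv : ∃ j, 1 ≤ j ∧ j ≤ 3 ∧ Vtx.w t j ∈ Rinv (Rrel lit m) E'' := by
    obtain ⟨w1, q1, rfl, he1, hc1⟩ := seg_cases hseg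
    have hw1 := eg_out_z (hEsub he1); subst hw1
    rcases hc1 with ⟨hmem, rfl⟩ | ⟨hnmem, hseg1⟩
    · exact ⟨1, le_rfl, by omega, hmem.resolve_left w_notin_C⟩
    obtain ⟨w2, q2, rfl, he2, hc2⟩ := seg_cases hseg1
    have hw2 : w2 = Vtx.w t 2 := by
      rcases eg_out_w (hEsub he2) with ⟨-, h⟩ | ⟨h, -⟩
      · exact h
      · omega
    subst hw2
    rcases hc2 with ⟨hmem, rfl⟩ | ⟨hnmem2, hseg2⟩
    · exact ⟨2, by omega, by omega, hmem.resolve_left w_notin_C⟩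
    obtain ⟨w3, q3, rfl, he3, hc3⟩ := seg_cases hseg2
    have hw3 : w3 = Vtx.w t 3 := by
      rcases eg_out_w (hEsub he3) with ⟨h, -⟩ | ⟨-, h⟩
      · omega
      · exact h
    subst hw3
    rcases hc3 with ⟨hmem, rfl⟩ | ⟨hnmem3, hseg3⟩
    · exact ⟨3, by omega, le_rfl, hmem.resolve_left w_notin_C⟩
    obtain ⟨w4, q4, rfl, he4, -⟩ := seg_cases hseg3
    rcases eg_out_w (hEsub he4) with ⟨h, -⟩ | ⟨h, -⟩ <;> omega
  obtain ⟨j, hj1, hj2, hr⟩ := hrinv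
  exact ⟨j, hj1, hj2, eval_of_rinv hwf ht1 ht2 hj1 hj2 hsub hr⟩

end Aux9
section Aux10

variable {n m : ℕ} {lit : ℕ → ℕ → Lit}

lemma QAux_succ (P : (ℕ → Bool) → Prop) (i k : ℕ) (σ : ℕ → Bool) :
    QAux P i (k+1) σ = if i % 2 = 1 then ∃ b, QAux P (i + 1) k (Function.update σ i b)
      else ∀ b, QAux P (i + 1) k (Function.update σ i b) := rfl

lemma QAux_zero (P : (ℕ → Bool) → Prop) (i : ℕ) (σ : ℕ → Bool) :
    QAux P i 0 σ = P σ := rfl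

lemma main_induction (hne : n % 2 = 0) (hn2 : 2 ≤ n) (hm : 1 ≤ m) (hwf : LitWF n m lit) :
    ∀ d k σ, k + d = n → 1 ≤ d →
      (k % 2 = 0 → MoverWins (Cset n m) (Rrel lit m) true (Vtx.g k) (Estate n m k σ)) →
      (k % 2 = 1 → MoverWins (Cset n m) (Rrel lit m) false (Vtx.g k) (Estate n m k σ)) →
      QAux (FTrue lit m) (k+1) d σ := by
  intro d
  induction d with
  | zero => intro k σ h h1; omega
  | succ d ih =>
    intro k σ hkd hd1 hwt hwfa
    rcases Nat.eq_zero_or_pos d with rfl | hd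
    · -- last move : k = n - 1, which is odd
      have hk : k + 1 = n := by omega
      subst hk
      have hkodd : k % 2 = 1 := by omega
      rw [QAux_succ, if_neg (by omega)]
      intro b
      rw [QAux_zero]
      intro t ht1 ht2
      cases hwfa hkodd with
      | loses h1 h2 =>
        have hlm := final_move_mk (lit := lit) hn2 rfl σ b ht1 ht2
        have hw2 := h2 _ _ ⟨_, hlm⟩
        exact clause_true_of_win hwf ht1 ht2 (final_state_sub hn2 rfl) hw2
    · -- intermediate move
      have hk2 : k + 2 ≤ n := by omega
      rcases Nat.mod_two_eq_zero_or_one k with hpar | hpar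
      · -- ∃-player to move
        rw [QAux_succ, if_pos (by omega)]
        cases hwt hpar with
        | winsNow h hr =>
          obtain ⟨bb, rfl, -⟩ := gadget_move_char hn2 hk2 h
          obtain ⟨i', j', hwv⟩ := rinv_w_only hr
          simp at hwv
        | winsLater h hw' =>
          obtain ⟨bb, rfl, rfl⟩ := gadget_move_char hn2 hk2 h
          exact ⟨bb, ih (k+1) (Function.update σ (k+1) bb) (by omega) hd
            (fun h0 => absurd h0 (by omega)) (fun _ => hw')⟩
      · -- ∀-player to move
        rw [QAux_succ, if_neg (by omega)]
        intro b
        cases hwfa hpar with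
        | loses h1 h2 =>
          have hlm := gadget_move_mk (m := m) (lit := lit) hn2 hk2 σ b
          have hw2 := h2 _ _ ⟨_, hlm⟩
          exact ih (k+1) (Function.update σ (k+1) b) (by omega) hd
            (fun _ => hw2) (fun h0 => absurd h0 (by omega))

end Aux10
/-- If the ∃-player (who moves first, from `s = g₀`, with initial edge
set `E(G)`) has a winning strategy in the graph game on `(G, C, s, R)` constructed from
the restricted quantified Boolean formula `Q`, then `Q` is true. -/
theorem qbf_true_of_existsPlayer_wins
    (n m : ℕ) (hn : Even n) (hn2 : 2 ≤ n) (hm : 1 ≤ m)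
    (lit : ℕ → ℕ → Lit) (hwf : LitWF n m lit)
    (hwin : MoverWins (Cset n m) (Rrel lit m) true (Vtx.g 0) (EG n m)) :
    QTrue n m lit := by
  have hne : n % 2 = 0 := by
    obtain ⟨r, hr⟩ := hn; omega
  have h0 : MoverWins (Cset n m) (Rrel lit m) true (Vtx.g 0)
      (Estate n m 0 (fun _ => false)) := by
    rw [Estate_zero]; exact hwin
  exact main_induction hne hn2 hm hwf n 0 (fun _ => false) (by omega) (by omega)
    (fun _ => h0) (fun h => by omega)

end PhutballQBF
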